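/- Let n ≥ 1, let Ω ⊂ ℝⁿ be open and bounded, and let E ⊂ ℝⁿ be measurable with Per_{s₀}(E,Ω) < ∞ for some s₀ ∈ (0,1/2). Suppose the limit Ξ_E = lim_{s→0⁺} s · Λ_E(x, r, s) exists for some (hence all) x ∈ ℝⁿ and r > 0. Then lim_{s→0⁺} s · Per_s(E,Ω) exists and equals 2[(1 − Ξ_E) 𝓛ⁿ(E ∩ Ω) + Ξ_E 𝓛ⁿ(E^c ∩ Ω)]. -/

import Mathlib

open MeasureTheory Real Filter Topology Set
open scoped ENNReal

noncomputable def heatKernel (n : ℕ) (t : ℝ) (x y : EuclideanSpace ℝ (Fin n)) : ℝ :=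
  (4 * π * t) ^ (-(n : ℝ) / 2) * Real.exp (-‖x - y‖ ^ 2 / (4 * t))

/-- `L_s(A,B) = ∫₀^∞ t^{-(1+s)} ∫_A ∫_B p_t(x,y) dy dx dt`. -/
noncomputable def Lfun (n : ℕ) (s : ℝ) (A B : Set (EuclideanSpace ℝ (Fin n))) : ℝ≥0∞ :=
  ∫⁻ t in Set.Ioi (0:ℝ), ENNReal.ofReal (t ^ (-(1 + s))) *
    ∫⁻ x in A, ∫⁻ y in B, ENNReal.ofReal (heatKernel n t x y)

/-- The relative `s`-perimeter
`Per_s(E,Ω) = 2[L_s(E∩Ω, Eᶜ∩Ω) + L_s(E∩Ω, Eᶜ∩Ωᶜ) + L_s(E∩Ωᶜ, Eᶜ∩Ω)]`. -/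
noncomputable def sPer (n : ℕ) (s : ℝ) (E Ω : Set (EuclideanSpace ℝ (Fin n))) : ℝ≥0∞ :=
  2 * (Lfun n s (E ∩ Ω) (Eᶜ ∩ Ω) + Lfun n s (E ∩ Ω) (Eᶜ ∩ Ωᶜ) + Lfun n s (E ∩ Ωᶜ) (Eᶜ ∩ Ω))

/-- `Λ_E(x,r,s) = ∫₁^∞ t^{-(1+s)} ∫_{E \ B(x,r)} p_t(x,y) dy dt`. -/
noncomputable def LambdaE (n : ℕ) (E : Set (EuclideanSpace ℝ (Fin n)))
    (x : EuclideanSpace ℝ (Fin n)) (r s : ℝ) : ℝ≥0∞ :=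
  ∫⁻ t in Set.Ioi (1:ℝ), ENNReal.ofReal (t ^ (-(1 + s))) *
    ∫⁻ y in E \ Metric.ball x r, ENNReal.ofReal (heatKernel n t x y)

namespace S14

variable {n : ℕ}

lemma hk_symm (n : ℕ) (t : ℝ) (x y : EuclideanSpace ℝ (Fin n)) :
    heatKernel n t x y = heatKernel n t y x := by
  unfold heatKernel; rw [norm_sub_rev]

lemma hk_nonneg (n : ℕ) {t : ℝ} (ht : 0 < t) (x y : EuclideanSpace ℝ (Fin n)) :
    0 ≤ heatKernel n t x y := by
  unfold heatKernel
  have : (0:ℝ) ≤ (4 * π * t) := by positivity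
  positivity

lemma measurable_hk_real (n : ℕ) :
    Measurable (fun p : ℝ × (EuclideanSpace ℝ (Fin n) × EuclideanSpace ℝ (Fin n)) =>
      heatKernel n p.1 p.2.1 p.2.2) := by
  unfold heatKernel
  apply Measurable.mul
  · exact (measurable_fst.const_mul (4 * π)).pow_const _
  · apply Real.measurable_exp.comp
    apply Measurable.div
    · exact ((measurable_snd.fst.sub measurable_snd.snd).norm.pow_const _).neg
    · exact measurable_fst.const_mul 4

lemma measurable_hk (n : ℕ) :
    Measurable (fun p : ℝ × (EuclideanSpace ℝ (Fin n) × EuclideanSpace ℝ (Fin n)) =>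
      ENNReal.ofReal (heatKernel n p.1 p.2.1 p.2.2)) :=
  (measurable_hk_real n).ennreal_ofReal

lemma measurable_hk_real_y (n : ℕ) (t : ℝ) (x : EuclideanSpace ℝ (Fin n)) :
    Measurable (fun y => heatKernel n t x y) :=
  (measurable_hk_real n).comp (measurable_const.prodMk (measurable_const.prodMk measurable_id))

lemma measurable_hk_y (n : ℕ) (t : ℝ) (x : EuclideanSpace ℝ (Fin n)) :
    Measurable (fun y => ENNReal.ofReal (heatKernel n t x y)) :=
  (measurable_hk_real_y n t x).ennreal_ofReal

lemma integrable_gauss (n : ℕ) {b : ℝ} (hb : 0 < b) :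
    Integrable (fun v : EuclideanSpace ℝ (Fin n) => rexp (-b * ‖v‖ ^ 2)) := by
  have h : Integrable (fun v : EuclideanSpace ℝ (Fin n) =>
      Complex.exp (-(b:ℂ) * (‖v‖:ℂ) ^ 2 + 0 * (inner ℝ ((0:EuclideanSpace ℝ (Fin n))) v : ℝ))) :=
    GaussianFourier.integrable_cexp_neg_mul_sq_norm_add (by simpa using hb) 0 0
  have h2 : Integrable (fun v : EuclideanSpace ℝ (Fin n) =>
      Complex.exp (((-b * ‖v‖ ^ 2 : ℝ) : ℂ))) := by
    refine h.congr (Eventually.of_forall fun v => ?_)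
    push_cast
    ring_nf
  have h3 := h2.norm
  refine h3.congr (Eventually.of_forall fun v => ?_)
  simp only [Complex.norm_exp, Complex.ofReal_re]

lemma integral_gauss (n : ℕ) {b : ℝ} (hb : 0 < b) :
    ∫ v : EuclideanSpace ℝ (Fin n), rexp (-b * ‖v‖ ^ 2) = (π / b) ^ ((n:ℝ) / 2) := by
  rw [GaussianFourier.integral_rexp_neg_mul_sq_norm hb]
  norm_num [finrank_euclideanSpace_fin]

lemma lintegral_gauss (n : ℕ) {b : ℝ} (hb : 0 < b) (x : EuclideanSpace ℝ (Fin n)) :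
    ∫⁻ y : EuclideanSpace ℝ (Fin n), ENNReal.ofReal (rexp (-b * ‖x - y‖ ^ 2)) =
      ENNReal.ofReal ((π / b) ^ ((n:ℝ) / 2)) := by
  have h1 : ∀ y : EuclideanSpace ℝ (Fin n), ‖x - y‖ = ‖y - x‖ := fun y => norm_sub_rev _ _
  simp_rw [h1]
  have h2 : (∫⁻ y : EuclideanSpace ℝ (Fin n), ENNReal.ofReal (rexp (-b * ‖y - x‖ ^ 2))) =
      ∫⁻ y : EuclideanSpace ℝ (Fin n), ENNReal.ofReal (rexp (-b * ‖y‖ ^ 2)) := by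
    exact lintegral_sub_right_eq_self (fun y => ENNReal.ofReal (rexp (-b * ‖y‖ ^ 2))) x
  rw [h2, ← ofReal_integral_eq_lintegral_ofReal (integrable_gauss n hb)
    (Eventually.of_forall fun v => (Real.exp_pos _).le), integral_gauss n hb]

lemma measurable_gaussfn (n : ℕ) (b : ℝ) (x : EuclideanSpace ℝ (Fin n)) :
    Measurable (fun y : EuclideanSpace ℝ (Fin n) => ENNReal.ofReal (rexp (-b * ‖x - y‖ ^ 2))) :=
  (Real.measurable_exp.comp
    (((measurable_const.sub measurable_id).norm.pow_const 2).const_mul (-b))).ennreal_ofReal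

lemma lint_hk_total {t : ℝ} (ht : 0 < t) (x : EuclideanSpace ℝ (Fin n)) :
    ∫⁻ y, ENNReal.ofReal (heatKernel n t x y) = 1 := by
  have hc : (0:ℝ) ≤ (4 * π * t) ^ (-(n : ℝ) / 2) := by
    have : (0:ℝ) < 4 * π * t := by positivity
    positivity
  have hrw : ∀ y : EuclideanSpace ℝ (Fin n), ENNReal.ofReal (heatKernel n t x y) =
      ENNReal.ofReal ((4 * π * t) ^ (-(n : ℝ) / 2)) *
        ENNReal.ofReal (rexp (-(1/(4*t)) * ‖x - y‖ ^ 2)) := by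
    intro y
    rw [← ENNReal.ofReal_mul hc]
    unfold heatKernel
    congr 2
    field_simp
  simp_rw [hrw]
  rw [lintegral_const_mul _ (measurable_gaussfn n (1/(4*t)) x),
    lintegral_gauss n (by positivity) x,
    ← ENNReal.ofReal_mul hc]
  have h4 : π / (1/(4*t)) = 4 * π * t := by field_simp
  rw [h4, ← Real.rpow_add (by positivity : (0:ℝ) < 4 * π * t),
    show (-(n:ℝ)/2 + (n:ℝ)/2) = 0 by ring, Real.rpow_zero, ENNReal.ofReal_one]

lemma lint_hk_set_le_one {t : ℝ} (ht : 0 < t) (x : EuclideanSpace ℝ (Fin n))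
    (S : Set (EuclideanSpace ℝ (Fin n))) :
    ∫⁻ y in S, ENNReal.ofReal (heatKernel n t x y) ≤ 1 := by
  rw [← lint_hk_total ht x]
  exact setLIntegral_le_lintegral _ _

lemma hk_le_const {t : ℝ} (ht : 0 < t) (x y : EuclideanSpace ℝ (Fin n)) :
    heatKernel n t x y ≤ (4 * π * t) ^ (-(n : ℝ) / 2) := by
  unfold heatKernel
  have hc : (0:ℝ) ≤ (4 * π * t) ^ (-(n : ℝ) / 2) := by
    have : (0:ℝ) < 4 * π * t := by positivity
    positivity
  refine mul_le_of_le_one_right hc ?_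
  rw [Real.exp_le_one_iff]
  have : (0:ℝ) ≤ ‖x - y‖ ^ 2 := by positivity
  have h4 : (0:ℝ) < 4 * t := by linarith
  exact div_nonpos_of_nonpos_of_nonneg (by linarith) h4.le

lemma lint_hk_set_le_vol {t : ℝ} (ht : 0 < t) (x : EuclideanSpace ℝ (Fin n))
    (S : Set (EuclideanSpace ℝ (Fin n))) :
    ∫⁻ y in S, ENNReal.ofReal (heatKernel n t x y) ≤
      ENNReal.ofReal ((4 * π * t) ^ (-(n : ℝ) / 2)) * volume S := by
  calc ∫⁻ y in S, ENNReal.ofReal (heatKernel n t x y)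
      ≤ ∫⁻ _ in S, ENNReal.ofReal ((4 * π * t) ^ (-(n : ℝ) / 2)) :=
        lintegral_mono fun y => ENNReal.ofReal_le_ofReal (hk_le_const ht x y)
    _ = ENNReal.ofReal ((4 * π * t) ^ (-(n : ℝ) / 2)) * volume S := by
        rw [setLIntegral_const]

lemma scalar_moment {t u : ℝ} (ht : 0 < t) (hu : 0 ≤ u) :
    u * rexp (-(1/(8*t)) * u ^ 2) ≤ Real.sqrt (2*t) := by
  have h2t : (0:ℝ) < 2 * t := by linarith
  have hs : 0 < Real.sqrt (2*t) := Real.sqrt_pos.2 h2t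
  have ha : (0:ℝ) ≤ u^2 / (8*t) := by positivity
  have e1 : 1 + u^2/(8*t) ≤ rexp (u^2/(8*t)) := Real.add_one_le_exp _ |>.trans_eq' (by ring_nf)
  have e2 : 2 * Real.sqrt (u^2/(8*t)) ≤ 1 + u^2/(8*t) := by
    nlinarith [sq_nonneg (Real.sqrt (u^2/(8*t)) - 1), Real.sq_sqrt ha]
  have e3 : Real.sqrt (u^2/(8*t)) = u / Real.sqrt (8*t) := by
    rw [Real.sqrt_div (sq_nonneg u), Real.sqrt_sq hu]
  have e4 : Real.sqrt (8*t) = 2 * Real.sqrt (2*t) := by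
    rw [show (8:ℝ)*t = 2^2*(2*t) by ring, Real.sqrt_mul (by positivity),
      Real.sqrt_sq (by norm_num : (0:ℝ) ≤ 2)]
  have key : u ≤ Real.sqrt (2*t) * rexp (u^2/(8*t)) := by
    have h6 : 2 * (u / (2 * Real.sqrt (2*t))) = u / Real.sqrt (2*t) := by
      field_simp
    have e5 : u / Real.sqrt (2*t) ≤ rexp (u^2/(8*t)) := by
      rw [← h6, ← e4, ← e3]; linarith
    calc u = (u / Real.sqrt (2*t)) * Real.sqrt (2*t) := by field_simp
    _ ≤ rexp (u^2/(8*t)) * Real.sqrt (2*t) := mul_le_mul_of_nonneg_right e5 hs.le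
    _ = Real.sqrt (2*t) * rexp (u^2/(8*t)) := mul_comm _ _
  have h7 : u * rexp (-(1/(8*t)) * u^2) ≤
      (Real.sqrt (2*t) * rexp (u^2/(8*t))) * rexp (-(1/(8*t))*u^2) :=
    mul_le_mul_of_nonneg_right key (Real.exp_nonneg _)
  refine h7.trans_eq ?_
  rw [mul_assoc, ← Real.exp_add]
  have h8 : u^2/(8*t) + (-(1/(8*t)) * u^2) = 0 := by field_simp; ring
  rw [h8, Real.exp_zero, mul_one]

lemma lint_hk_moment {t : ℝ} (ht : 0 < t) (x : EuclideanSpace ℝ (Fin n)) :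
    ∫⁻ y, ENNReal.ofReal (heatKernel n t x y * ‖x - y‖) ≤
      ENNReal.ofReal (2 ^ ((n:ℝ)/2) * Real.sqrt (2*t)) := by
  have hpos : (0:ℝ) < 4 * π * t := by positivity
  have hc : (0:ℝ) ≤ (4 * π * t) ^ (-(n : ℝ) / 2) := by positivity
  have key : ∀ y : EuclideanSpace ℝ (Fin n), heatKernel n t x y * ‖x - y‖ ≤
      (Real.sqrt (2*t) * (4 * π * t) ^ (-(n : ℝ) / 2)) *
        rexp (-(1/(8*t)) * ‖x - y‖ ^ 2) := by
    intro y
    have hsplit : heatKernel n t x y = (4 * π * t) ^ (-(n : ℝ) / 2) *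
        (rexp (-(1/(8*t)) * ‖x - y‖ ^ 2) * rexp (-(1/(8*t)) * ‖x - y‖ ^ 2)) := by
      unfold heatKernel
      rw [← Real.exp_add]
      congr 1
      field_simp
      ring
    rw [hsplit]
    have hm := scalar_moment ht (norm_nonneg (x - y))
    calc (4 * π * t) ^ (-(n : ℝ) / 2) *
        (rexp (-(1/(8*t)) * ‖x - y‖ ^ 2) * rexp (-(1/(8*t)) * ‖x - y‖ ^ 2)) * ‖x - y‖
        = ((4 * π * t) ^ (-(n : ℝ) / 2) * rexp (-(1/(8*t)) * ‖x - y‖ ^ 2)) *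
            (‖x - y‖ * rexp (-(1/(8*t)) * ‖x - y‖ ^ 2)) := by ring
      _ ≤ ((4 * π * t) ^ (-(n : ℝ) / 2) * rexp (-(1/(8*t)) * ‖x - y‖ ^ 2)) *
            Real.sqrt (2*t) := mul_le_mul_of_nonneg_left hm (by positivity)
      _ = (Real.sqrt (2*t) * (4 * π * t) ^ (-(n : ℝ) / 2)) *
            rexp (-(1/(8*t)) * ‖x - y‖ ^ 2) := by ring
  calc ∫⁻ y, ENNReal.ofReal (heatKernel n t x y * ‖x - y‖)
      ≤ ∫⁻ y, ENNReal.ofReal ((Real.sqrt (2*t) * (4 * π * t) ^ (-(n : ℝ) / 2)) *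
          rexp (-(1/(8*t)) * ‖x - y‖ ^ 2)) :=
        lintegral_mono fun y => ENNReal.ofReal_le_ofReal (key y)
    _ = ENNReal.ofReal (Real.sqrt (2*t) * (4 * π * t) ^ (-(n : ℝ) / 2)) *
          ENNReal.ofReal ((π / (1/(8*t))) ^ ((n:ℝ)/2)) := by
        simp_rw [ENNReal.ofReal_mul
          (by positivity : (0:ℝ) ≤ Real.sqrt (2*t) * (4 * π * t) ^ (-(n : ℝ) / 2))]
        rw [lintegral_const_mul _ (measurable_gaussfn n (1/(8*t)) x),
          lintegral_gauss n (by positivity) x]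
    _ ≤ ENNReal.ofReal (2 ^ ((n:ℝ)/2) * Real.sqrt (2*t)) := by
        rw [← ENNReal.ofReal_mul (by positivity)]
        apply ENNReal.ofReal_le_ofReal
        apply le_of_eq
        have h8 : π / (1/(8*t)) = 2 * (4 * π * t) := by field_simp; ring
        have h9 : (4*π*t) ^ (-(n:ℝ)/2) * (4*π*t) ^ ((n:ℝ)/2) = 1 := by
          rw [← Real.rpow_add hpos, show (-(n:ℝ)/2 + (n:ℝ)/2) = 0 by ring, Real.rpow_zero]
        rw [h8, Real.mul_rpow (by norm_num) hpos.le]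
        calc Real.sqrt (2*t) * (4*π*t) ^ (-(n:ℝ)/2) * ((2:ℝ) ^ ((n:ℝ)/2) * (4*π*t) ^ ((n:ℝ)/2))
            = (2:ℝ) ^ ((n:ℝ)/2) * Real.sqrt (2*t) *
              ((4*π*t) ^ (-(n:ℝ)/2) * (4*π*t) ^ ((n:ℝ)/2)) := by ring
          _ = 2 ^ ((n:ℝ)/2) * Real.sqrt (2*t) := by rw [h9, mul_one]

lemma exp_neg_sub_le (a b : ℝ) :
    rexp (-a) ≤ rexp (-b) + |a - b| * (rexp (-a) + rexp (-b)) := by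
  rcases le_total a b with h | h
  · have h1 : 1 + (a - b) ≤ rexp (a - b) := Real.add_one_le_exp _ |>.trans_eq' (by ring)
    have h2 : rexp (-b) = rexp (-a) * rexp (a - b) := by
      rw [← Real.exp_add]; ring_nf
    have h3 : |a - b| = b - a := by rw [abs_of_nonpos (by linarith)]; ring
    rw [h3]
    nlinarith [Real.exp_pos (-a), Real.exp_pos (-b), Real.exp_pos (a - b),
      mul_nonneg (Real.exp_pos (-a)).le (mul_nonneg (sub_nonneg.2 h) (Real.exp_pos (a-b)).le)]
  · have h4 : rexp (-a) ≤ rexp (-b) := Real.exp_le_exp.2 (by linarith)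
    nlinarith [abs_nonneg (a - b), Real.exp_pos (-a), Real.exp_pos (-b)]

lemma hk_shift_pointwise {t R : ℝ} (ht : 0 < t) {x x' : EuclideanSpace ℝ (Fin n)}
    (hxx : ‖x - x'‖ ≤ R) (y : EuclideanSpace ℝ (Fin n)) :
    heatKernel n t x' y ≤ heatKernel n t x y +
      (R * (‖x - y‖ + ‖x' - y‖) / (4*t)) *
        (heatKernel n t x y + heatKernel n t x' y) := by
  have hc : (0:ℝ) ≤ (4 * π * t) ^ (-(n : ℝ) / 2) := by
    have : (0:ℝ) < 4 * π * t := by positivity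
    positivity
  set u1 := ‖x - y‖ with hu1
  set u2 := ‖x' - y‖ with hu2
  have hu1n : 0 ≤ u1 := norm_nonneg _
  have hu2n : 0 ≤ u2 := norm_nonneg _
  have hRn : 0 ≤ R := le_trans (norm_nonneg _) hxx
  set a := u2 ^ 2 / (4*t) with ha
  set b := u1 ^ 2 / (4*t) with hb
  have key := exp_neg_sub_le a b
  have habs : |a - b| ≤ R * (u1 + u2) / (4*t) := by
    have h5 : |u2 - u1| ≤ R := by
      have := abs_norm_sub_norm_le (x' - y) (x - y)
      have h6 : (x' - y) - (x - y) = -(x - x') := by abel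
      rw [h6, norm_neg] at this
      exact le_trans this hxx
    have h7 : a - b = ((u2 - u1) * (u2 + u1)) / (4*t) := by
      rw [ha, hb]; ring
    rw [h7, abs_div, abs_of_pos (by linarith : (0:ℝ) < 4*t), abs_mul,
      abs_of_nonneg (by linarith : (0:ℝ) ≤ u2 + u1)]
    have h8 : |u2 - u1| * (u2 + u1) ≤ R * (u1 + u2) := by
      calc |u2 - u1| * (u2 + u1) ≤ R * (u2 + u1) :=
            mul_le_mul_of_nonneg_right h5 (by linarith)
        _ = R * (u1 + u2) := by ring
    exact (div_le_div_iff_of_pos_right (by linarith : (0:ℝ) < 4*t)).2 h8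
  have hk1 : heatKernel n t x y = (4 * π * t) ^ (-(n : ℝ) / 2) * rexp (-b) := by
    unfold heatKernel; rw [← hu1, hb]; congr 1; rw [neg_div]
  have hk2 : heatKernel n t x' y = (4 * π * t) ^ (-(n : ℝ) / 2) * rexp (-a) := by
    unfold heatKernel; rw [← hu2, ha]; congr 1; rw [neg_div]
  rw [hk1, hk2]
  have step : rexp (-a) ≤ rexp (-b) + (R * (u1 + u2) / (4*t)) * (rexp (-a) + rexp (-b)) := by
    refine key.trans ?_
    have := add_nonneg (Real.exp_pos (-a)).le (Real.exp_pos (-b)).le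
    nlinarith [mul_le_mul_of_nonneg_right habs this]
  calc (4 * π * t) ^ (-(n : ℝ) / 2) * rexp (-a)
      ≤ (4 * π * t) ^ (-(n : ℝ) / 2) *
          (rexp (-b) + (R * (u1 + u2) / (4*t)) * (rexp (-a) + rexp (-b))) :=
        mul_le_mul_of_nonneg_left step hc
    _ = (4 * π * t) ^ (-(n : ℝ) / 2) * rexp (-b) + (R * (u1 + u2) / (4*t)) *
          ((4 * π * t) ^ (-(n : ℝ) / 2) * rexp (-b) +
           (4 * π * t) ^ (-(n : ℝ) / 2) * rexp (-a)) := by ring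

noncomputable def shiftC (n : ℕ) (R : ℝ) : ℝ := R * (2 ^ ((n:ℝ)/2) * Real.sqrt 2 + R)

lemma lint_hk_cross {t R : ℝ} (ht : 0 < t) {x x' : EuclideanSpace ℝ (Fin n)}
    (hxx : ‖x - x'‖ ≤ R) :
    ∫⁻ y, ENNReal.ofReal (heatKernel n t x y * ‖x' - y‖) ≤
      ENNReal.ofReal (2 ^ ((n:ℝ)/2) * Real.sqrt (2*t)) + ENNReal.ofReal R := by
  have hRn : 0 ≤ R := le_trans (norm_nonneg _) hxx
  have hpt : ∀ y : EuclideanSpace ℝ (Fin n), heatKernel n t x y * ‖x' - y‖ ≤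
      heatKernel n t x y * ‖x - y‖ + R * heatKernel n t x y := by
    intro y
    have h1 : ‖x' - y‖ ≤ ‖x - y‖ + R := by
      have := norm_sub_le_norm_sub_add_norm_sub x' x y
      have h2 : ‖x' - x‖ = ‖x - x'‖ := norm_sub_rev _ _
      linarith
    have h3 := hk_nonneg n ht x y
    nlinarith
  calc ∫⁻ y, ENNReal.ofReal (heatKernel n t x y * ‖x' - y‖)
      ≤ ∫⁻ y, (ENNReal.ofReal (heatKernel n t x y * ‖x - y‖) +
          ENNReal.ofReal (R * heatKernel n t x y)) :=
        lintegral_mono fun y =>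
          (ENNReal.ofReal_le_ofReal (hpt y)).trans ENNReal.ofReal_add_le
    _ = (∫⁻ y, ENNReal.ofReal (heatKernel n t x y * ‖x - y‖)) +
        ∫⁻ y, ENNReal.ofReal (R * heatKernel n t x y) := by
        rw [lintegral_add_left (f := fun y => ENNReal.ofReal (heatKernel n t x y * ‖x - y‖))
          (((measurable_hk_real_y n t x).mul
          (measurable_id'.const_sub x).norm).ennreal_ofReal)]
    _ ≤ ENNReal.ofReal (2 ^ ((n:ℝ)/2) * Real.sqrt (2*t)) + ENNReal.ofReal R := by
        refine add_le_add (lint_hk_moment ht x) ?_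
        simp_rw [ENNReal.ofReal_mul hRn]
        rw [lintegral_const_mul _ (measurable_hk_y n t x), lint_hk_total ht x, mul_one]

lemma shift_err_le (n : ℕ) {t R : ℝ} (ht : 1 ≤ t) (hR : 0 ≤ R) :
    (R/(4*t)) * (4*(2 ^ ((n:ℝ)/2) * Real.sqrt (2*t)) + 2*R) ≤
      shiftC n R * t ^ (-(1:ℝ)/2) := by
  have ht0 : (0:ℝ) < t := by linarith
  have hst1 : 1 ≤ Real.sqrt t := by
    rw [show (1:ℝ) = Real.sqrt 1 by simp]
    exact Real.sqrt_le_sqrt ht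
  have hst0 : 0 < Real.sqrt t := by linarith
  have hsq : Real.sqrt t ^ 2 = t := Real.sq_sqrt ht0.le
  have h2t : Real.sqrt (2*t) = Real.sqrt 2 * Real.sqrt t := Real.sqrt_mul (by norm_num) t
  have hrp : t ^ (-(1:ℝ)/2) = (Real.sqrt t)⁻¹ := by
    rw [show (-(1:ℝ)/2) = -(1/2) by ring, Real.rpow_neg ht0.le, ← Real.sqrt_eq_rpow]
  have hB : (0:ℝ) ≤ 2 ^ ((n:ℝ)/2) * Real.sqrt 2 := by positivity
  rw [hrp, h2t]
  unfold shiftC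
  set st := Real.sqrt t with hst
  rw [div_mul_eq_mul_div, div_le_iff₀ (by positivity : (0:ℝ) < 4*t), ← hsq]
  have hii : R * (2 ^ ((n:ℝ)/2) * Real.sqrt 2 + R) * st⁻¹ * (4*st^2) =
      R * (2 ^ ((n:ℝ)/2) * Real.sqrt 2 + R) * (4*st) := by
    field_simp
  rw [hii]
  nlinarith [mul_nonneg (mul_nonneg hR hR) (by linarith : (0:ℝ) ≤ st - 1),
    mul_nonneg (mul_nonneg hR hB) (by linarith : (0:ℝ) ≤ st - 1), sq_nonneg R]

lemma lint_hk_shift {t R : ℝ} (ht : 1 ≤ t) {x x' : EuclideanSpace ℝ (Fin n)}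
    (hxx : ‖x - x'‖ ≤ R) (S : Set (EuclideanSpace ℝ (Fin n))) :
    ∫⁻ y in S, ENNReal.ofReal (heatKernel n t x' y) ≤
      (∫⁻ y in S, ENNReal.ofReal (heatKernel n t x y)) +
        ENNReal.ofReal (shiftC n R * t ^ (-(1:ℝ)/2)) := by
  have ht0 : (0:ℝ) < t := lt_of_lt_of_le one_pos ht
  have hRn : 0 ≤ R := le_trans (norm_nonneg _) hxx
  have hxx' : ‖x' - x‖ ≤ R := by rw [norm_sub_rev]; exact hxx
  set M := (2:ℝ) ^ ((n:ℝ)/2) * Real.sqrt (2*t) with hM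
  set c := R / (4*t) with hc
  have hc0 : 0 ≤ c := by positivity
  have hM0 : 0 ≤ M := by positivity
  -- the four moment functions
  have meas1 : Measurable fun y => ENNReal.ofReal (heatKernel n t x y * ‖x - y‖) :=
    ((measurable_hk_real_y n t x).mul (measurable_id'.const_sub x).norm).ennreal_ofReal
  have meas2 : Measurable fun y => ENNReal.ofReal (heatKernel n t x y * ‖x' - y‖) :=
    ((measurable_hk_real_y n t x).mul (measurable_id'.const_sub x').norm).ennreal_ofReal
  have meas3 : Measurable fun y => ENNReal.ofReal (heatKernel n t x' y * ‖x - y‖) :=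
    ((measurable_hk_real_y n t x').mul (measurable_id'.const_sub x).norm).ennreal_ofReal
  calc ∫⁻ y in S, ENNReal.ofReal (heatKernel n t x' y)
      ≤ ∫⁻ y in S, (ENNReal.ofReal (heatKernel n t x y) +
          ENNReal.ofReal (c * ((heatKernel n t x y * ‖x - y‖ +
            heatKernel n t x y * ‖x' - y‖) + (heatKernel n t x' y * ‖x - y‖ +
            heatKernel n t x' y * ‖x' - y‖)))) := by
        refine lintegral_mono fun y => ?_
        refine (ENNReal.ofReal_le_ofReal ?_).trans ENNReal.ofReal_add_le
        have := hk_shift_pointwise (n := n) ht0 hxx y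
        calc heatKernel n t x' y ≤ heatKernel n t x y +
            R * (‖x - y‖ + ‖x' - y‖) / (4*t) *
              (heatKernel n t x y + heatKernel n t x' y) := this
          _ = heatKernel n t x y + c * ((heatKernel n t x y * ‖x - y‖ +
              heatKernel n t x y * ‖x' - y‖) + (heatKernel n t x' y * ‖x - y‖ +
              heatKernel n t x' y * ‖x' - y‖)) := by rw [hc]; ring
    _ = (∫⁻ y in S, ENNReal.ofReal (heatKernel n t x y)) +
        ∫⁻ y in S, ENNReal.ofReal (c * ((heatKernel n t x y * ‖x - y‖ +
          heatKernel n t x y * ‖x' - y‖) + (heatKernel n t x' y * ‖x - y‖ +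
          heatKernel n t x' y * ‖x' - y‖))) :=
        lintegral_add_left (measurable_hk_y n t x) _
    _ ≤ (∫⁻ y in S, ENNReal.ofReal (heatKernel n t x y)) +
        ENNReal.ofReal (shiftC n R * t ^ (-(1:ℝ)/2)) := by
        refine add_le_add_right ?_ _
        refine le_trans (setLIntegral_le_lintegral _ _) ?_
        simp_rw [ENNReal.ofReal_mul hc0]
        rw [lintegral_const_mul' _ _ ENNReal.ofReal_ne_top]
        have split : ∀ y : EuclideanSpace ℝ (Fin n),
            ENNReal.ofReal ((heatKernel n t x y * ‖x - y‖ +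
              heatKernel n t x y * ‖x' - y‖) + (heatKernel n t x' y * ‖x - y‖ +
              heatKernel n t x' y * ‖x' - y‖)) ≤
            (ENNReal.ofReal (heatKernel n t x y * ‖x - y‖) +
              ENNReal.ofReal (heatKernel n t x y * ‖x' - y‖)) +
            (ENNReal.ofReal (heatKernel n t x' y * ‖x - y‖) +
              ENNReal.ofReal (heatKernel n t x' y * ‖x' - y‖)) := fun y =>
          le_trans ENNReal.ofReal_add_le
            (add_le_add ENNReal.ofReal_add_le ENNReal.ofReal_add_le)
        have hsum : (∫⁻ y, ENNReal.ofReal ((heatKernel n t x y * ‖x - y‖ +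
              heatKernel n t x y * ‖x' - y‖) + (heatKernel n t x' y * ‖x - y‖ +
              heatKernel n t x' y * ‖x' - y‖))) ≤
            ENNReal.ofReal ((M + (M + R)) + ((M + R) + M)) := by
          calc _ ≤ ∫⁻ y, ((ENNReal.ofReal (heatKernel n t x y * ‖x - y‖) +
                ENNReal.ofReal (heatKernel n t x y * ‖x' - y‖)) +
                (ENNReal.ofReal (heatKernel n t x' y * ‖x - y‖) +
                  ENNReal.ofReal (heatKernel n t x' y * ‖x' - y‖))) :=
              lintegral_mono split
            _ = ((∫⁻ y, ENNReal.ofReal (heatKernel n t x y * ‖x - y‖)) +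
                ∫⁻ y, ENNReal.ofReal (heatKernel n t x y * ‖x' - y‖)) +
                ((∫⁻ y, ENNReal.ofReal (heatKernel n t x' y * ‖x - y‖)) +
                ∫⁻ y, ENNReal.ofReal (heatKernel n t x' y * ‖x' - y‖)) := by
              rw [lintegral_add_left (f := fun y => ENNReal.ofReal (heatKernel n t x y * ‖x - y‖) +
                  ENNReal.ofReal (heatKernel n t x y * ‖x' - y‖)) (meas1.add meas2), lintegral_add_left meas1,
                lintegral_add_left meas3]
            _ ≤ (ENNReal.ofReal M + (ENNReal.ofReal M + ENNReal.ofReal R)) +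
                ((ENNReal.ofReal M + ENNReal.ofReal R) + ENNReal.ofReal M) := by
              refine add_le_add (add_le_add ?_ ?_) (add_le_add ?_ ?_)
              · exact lint_hk_moment ht0 x
              · exact lint_hk_cross ht0 hxx
              · exact lint_hk_cross ht0 hxx'
              · exact lint_hk_moment ht0 x'
            _ = ENNReal.ofReal ((M + (M + R)) + ((M + R) + M)) := by
              rw [← ENNReal.ofReal_add hM0 hRn, ← ENNReal.ofReal_add hM0 (by linarith),
                ← ENNReal.ofReal_add (by linarith) hM0,
                ← ENNReal.ofReal_add (by linarith) (by linarith)]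
        calc ENNReal.ofReal c * ∫⁻ y, ENNReal.ofReal ((heatKernel n t x y * ‖x - y‖ +
              heatKernel n t x y * ‖x' - y‖) + (heatKernel n t x' y * ‖x - y‖ +
              heatKernel n t x' y * ‖x' - y‖))
            ≤ ENNReal.ofReal c * ENNReal.ofReal ((M + (M + R)) + ((M + R) + M)) :=
              mul_le_mul_right hsum _
          _ = ENNReal.ofReal (c * ((M + (M + R)) + ((M + R) + M))) :=
              (ENNReal.ofReal_mul hc0).symm
          _ ≤ ENNReal.ofReal (shiftC n R * t ^ (-(1:ℝ)/2)) := by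
              refine ENNReal.ofReal_le_ofReal ?_
              calc c * ((M + (M + R)) + ((M + R) + M))
                  = (R/(4*t)) * (4*(2 ^ ((n:ℝ)/2) * Real.sqrt (2*t)) + 2*R) := by
                    rw [hc, hM]; ring
                _ ≤ shiftC n R * t ^ (-(1:ℝ)/2) := shift_err_le n ht hRn

lemma measurable_inner_t (n : ℕ) (x : EuclideanSpace ℝ (Fin n))
    (S : Set (EuclideanSpace ℝ (Fin n))) :
    Measurable fun t : ℝ => ∫⁻ y in S, ENNReal.ofReal (heatKernel n t x y) :=
  Measurable.lintegral_prod_right'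
    ((measurable_hk n).comp (measurable_fst.prodMk (measurable_const.prodMk measurable_snd)))

lemma measurable_inner_tx (n : ℕ) (S : Set (EuclideanSpace ℝ (Fin n))) :
    Measurable fun p : ℝ × EuclideanSpace ℝ (Fin n) =>
      ∫⁻ y in S, ENNReal.ofReal (heatKernel n p.1 p.2 y) :=
  Measurable.lintegral_prod_right'
    ((measurable_hk n).comp ((measurable_fst.comp measurable_fst).prodMk
      ((measurable_snd.comp measurable_fst).prodMk measurable_snd)))

lemma measurable_inner_x (n : ℕ) (t : ℝ) (S : Set (EuclideanSpace ℝ (Fin n))) :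
    Measurable fun x' : EuclideanSpace ℝ (Fin n) =>
      ∫⁻ y in S, ENNReal.ofReal (heatKernel n t x' y) :=
  Measurable.lintegral_prod_right'
    ((measurable_hk n).comp (measurable_const.prodMk
      (measurable_fst.prodMk measurable_snd)))

lemma measurable_double_t (n : ℕ) (W S : Set (EuclideanSpace ℝ (Fin n))) :
    Measurable fun t : ℝ => ∫⁻ x in W, ∫⁻ y in S, ENNReal.ofReal (heatKernel n t x y) :=
  Measurable.lintegral_prod_right' (measurable_inner_tx n S)

lemma tint {s : ℝ} (hs : 0 < s) :
    ∫⁻ t in Set.Ioi (1:ℝ), ENNReal.ofReal (t ^ (-(1 + s))) = ENNReal.ofReal (1/s) := by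
  rw [← ofReal_integral_eq_lintegral_ofReal
    (integrableOn_Ioi_rpow_of_lt (by linarith) one_pos)
    ((ae_restrict_iff' measurableSet_Ioi).2 (Eventually.of_forall fun t ht =>
      Real.rpow_nonneg (le_of_lt (lt_trans one_pos ht)) _))]
  rw [integral_Ioi_rpow_of_lt (by linarith) one_pos, Real.one_rpow]
  congr 1
  field_simp
  rw [show -(1 + s) + 1 = -s by ring, div_neg, neg_neg, div_self hs.ne']

lemma tint32 : ∫⁻ t in Set.Ioi (1:ℝ), ENNReal.ofReal (t ^ (-(3:ℝ)/2)) = ENNReal.ofReal 2 := by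
  rw [← ofReal_integral_eq_lintegral_ofReal
    (integrableOn_Ioi_rpow_of_lt (by norm_num) one_pos)
    ((ae_restrict_iff' measurableSet_Ioi).2 (Eventually.of_forall fun t ht =>
      Real.rpow_nonneg (le_of_lt (lt_trans one_pos ht)) _))]
  rw [integral_Ioi_rpow_of_lt (by norm_num) one_pos, Real.one_rpow]
  norm_num

lemma tail_err {s C : ℝ} (hs : 0 < s) (hC : 0 ≤ C) :
    ∫⁻ t in Set.Ioi (1:ℝ), ENNReal.ofReal (t ^ (-(1 + s))) *
      ENNReal.ofReal (C * t ^ (-(1:ℝ)/2)) ≤ ENNReal.ofReal (2*C) := by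
  have step : ∀ t ∈ Set.Ioi (1:ℝ), ENNReal.ofReal (t ^ (-(1 + s))) *
      ENNReal.ofReal (C * t ^ (-(1:ℝ)/2)) ≤
      ENNReal.ofReal C * ENNReal.ofReal (t ^ (-(3:ℝ)/2)) := by
    intro t ht
    have ht1 : (1:ℝ) ≤ t := le_of_lt ht
    have ht0 : (0:ℝ) < t := lt_trans one_pos ht
    rw [← ENNReal.ofReal_mul (Real.rpow_nonneg ht0.le _),
      ← ENNReal.ofReal_mul hC]
    apply ENNReal.ofReal_le_ofReal
    have h1 : t ^ (-(1+s)) ≤ t ^ (-(1:ℝ)) :=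
      Real.rpow_le_rpow_of_exponent_le ht1 (by linarith)
    have h2 : t ^ (-(1:ℝ)) * t ^ (-(1:ℝ)/2) = t ^ (-(3:ℝ)/2) := by
      rw [← Real.rpow_add ht0]
      norm_num
    calc t ^ (-(1+s)) * (C * t ^ (-(1:ℝ)/2))
        ≤ t ^ (-(1:ℝ)) * (C * t ^ (-(1:ℝ)/2)) := by
          apply mul_le_mul_of_nonneg_right h1 (by positivity)
      _ = C * (t ^ (-(1:ℝ)) * t ^ (-(1:ℝ)/2)) := by ring
      _ = C * t ^ (-(3:ℝ)/2) := by rw [h2]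
  calc ∫⁻ t in Set.Ioi (1:ℝ), ENNReal.ofReal (t ^ (-(1 + s))) *
        ENNReal.ofReal (C * t ^ (-(1:ℝ)/2))
      ≤ ∫⁻ t in Set.Ioi (1:ℝ), ENNReal.ofReal C * ENNReal.ofReal (t ^ (-(3:ℝ)/2)) :=
        setLIntegral_mono' measurableSet_Ioi step
    _ = ENNReal.ofReal C * ENNReal.ofReal 2 := by
        rw [lintegral_const_mul' _ _ ENNReal.ofReal_ne_top, tint32]
    _ = ENNReal.ofReal (2*C) := by
        rw [← ENNReal.ofReal_mul hC, mul_comm]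

lemma tendsto_ofReal_zero : Tendsto (fun s : ℝ => ENNReal.ofReal s) (𝓝[>] (0:ℝ)) (𝓝 0) := by
  have h := (ENNReal.continuous_ofReal.tendsto 0).mono_left (nhdsWithin_le_nhds (s := Set.Ioi (0:ℝ)))
  simpa using h

lemma tendsto_ofReal_mul_const_zero (K : ℝ≥0∞) (hK : K ≠ ⊤) :
    Tendsto (fun s : ℝ => ENNReal.ofReal s * K) (𝓝[>] (0:ℝ)) (𝓝 0) := by
  have h := ENNReal.Tendsto.mul_const tendsto_ofReal_zero (Or.inr hK)
  simpa using h

lemma sandwich_tail {C : ℝ} (hC : 0 ≤ C) (f g : ℝ → ℝ≥0∞)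
    (hfg : ∀ t ∈ Set.Ioi (1:ℝ), f t ≤ g t + ENNReal.ofReal (C * t ^ (-(1:ℝ)/2)))
    {s : ℝ} (hs : 0 < s) :
    (ENNReal.ofReal s * ∫⁻ t in Set.Ioi (1:ℝ), ENNReal.ofReal (t ^ (-(1 + s))) * f t) ≤
    (ENNReal.ofReal s * ∫⁻ t in Set.Ioi (1:ℝ), ENNReal.ofReal (t ^ (-(1 + s))) * g t) +
      ENNReal.ofReal s * ENNReal.ofReal (2*C) := by
  have mcs : Measurable fun t : ℝ => ENNReal.ofReal (t ^ (-(1 + s))) *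
      ENNReal.ofReal (C * t ^ (-(1:ℝ)/2)) :=
    ((measurable_id'.pow_const _).ennreal_ofReal).mul
      (((measurable_id'.pow_const _).const_mul C).ennreal_ofReal)
  have step1 : (∫⁻ t in Set.Ioi (1:ℝ), ENNReal.ofReal (t ^ (-(1 + s))) * f t) ≤
      (∫⁻ t in Set.Ioi (1:ℝ), (ENNReal.ofReal (t ^ (-(1 + s))) * g t +
        ENNReal.ofReal (t ^ (-(1 + s))) * ENNReal.ofReal (C * t ^ (-(1:ℝ)/2)))) := by
    apply setLIntegral_mono' measurableSet_Ioi
    intro t ht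
    rw [← mul_add]
    exact mul_le_mul_right (hfg t ht) _
  have step2 : (∫⁻ t in Set.Ioi (1:ℝ), (ENNReal.ofReal (t ^ (-(1 + s))) * g t +
      ENNReal.ofReal (t ^ (-(1 + s))) * ENNReal.ofReal (C * t ^ (-(1:ℝ)/2)))) =
      (∫⁻ t in Set.Ioi (1:ℝ), ENNReal.ofReal (t ^ (-(1 + s))) * g t) +
      ∫⁻ t in Set.Ioi (1:ℝ), ENNReal.ofReal (t ^ (-(1 + s))) *
        ENNReal.ofReal (C * t ^ (-(1:ℝ)/2)) := lintegral_add_right _ mcs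
  calc ENNReal.ofReal s * ∫⁻ t in Set.Ioi (1:ℝ), ENNReal.ofReal (t ^ (-(1 + s))) * f t
      ≤ ENNReal.ofReal s * ((∫⁻ t in Set.Ioi (1:ℝ),
          ENNReal.ofReal (t ^ (-(1 + s))) * g t) +
        ∫⁻ t in Set.Ioi (1:ℝ), ENNReal.ofReal (t ^ (-(1 + s))) *
          ENNReal.ofReal (C * t ^ (-(1:ℝ)/2))) :=
        mul_le_mul_right (step1.trans_eq step2) _
    _ = ENNReal.ofReal s * (∫⁻ t in Set.Ioi (1:ℝ),
          ENNReal.ofReal (t ^ (-(1 + s))) * g t) +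
        ENNReal.ofReal s * ∫⁻ t in Set.Ioi (1:ℝ), ENNReal.ofReal (t ^ (-(1 + s))) *
          ENNReal.ofReal (C * t ^ (-(1:ℝ)/2)) := mul_add _ _ _
    _ ≤ _ := add_le_add_right (mul_le_mul_right (tail_err hs hC) _) _

lemma tendsto_pointwise (n : ℕ) (hn : 1 ≤ n) {E : Set (EuclideanSpace ℝ (Fin n))}
    (hE : MeasurableSet E) {x : EuclideanSpace ℝ (Fin n)} {r : ℝ} (hr : 0 < r)
    {ΞE : ℝ≥0∞}
    (hΞ : Tendsto (fun s : ℝ => ENNReal.ofReal s * LambdaE n E x r s)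
      (𝓝[>] (0:ℝ)) (𝓝 ΞE))
    {x' : EuclideanSpace ℝ (Fin n)} {R : ℝ} (hxx : ‖x - x'‖ ≤ R) :
    Tendsto (fun s : ℝ => ENNReal.ofReal s * ∫⁻ t in Set.Ioi (1:ℝ),
      ENNReal.ofReal (t ^ (-(1 + s))) * ∫⁻ y in E, ENNReal.ofReal (heatKernel n t x' y))
      (𝓝[>] (0:ℝ)) (𝓝 ΞE) := by
  have hRn : 0 ≤ R := le_trans (norm_nonneg _) hxx
  have hxx' : ‖x' - x‖ ≤ R := by rw [norm_sub_rev]; exact hxx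
  set vB := (volume (Metric.ball x r)).toReal with hvB
  have hvB0 : 0 ≤ vB := ENNReal.toReal_nonneg
  set cB := (4*π) ^ (-(n:ℝ)/2) * vB with hcB
  have hcB0 : 0 ≤ cB := by
    have : (0:ℝ) < 4*π := by positivity
    positivity
  have hsh0 : 0 ≤ shiftC n R := by
    unfold shiftC
    positivity
  set C := shiftC n R + cB with hC
  have hC0 : 0 ≤ C := by positivity
  -- ball error bound
  have hball : ∀ t ∈ Set.Ioi (1:ℝ), ∫⁻ y in E ∩ Metric.ball x r,
      ENNReal.ofReal (heatKernel n t x y) ≤ ENNReal.ofReal (cB * t ^ (-(1:ℝ)/2)) := by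
    intro t ht
    have ht1 : (1:ℝ) ≤ t := le_of_lt ht
    have ht0 : (0:ℝ) < t := lt_trans one_pos ht
    calc ∫⁻ y in E ∩ Metric.ball x r, ENNReal.ofReal (heatKernel n t x y)
        ≤ ENNReal.ofReal ((4 * π * t) ^ (-(n : ℝ) / 2)) * volume (E ∩ Metric.ball x r) :=
          lint_hk_set_le_vol ht0 x _
      _ ≤ ENNReal.ofReal ((4 * π * t) ^ (-(n : ℝ) / 2)) * volume (Metric.ball x r) :=
          mul_le_mul_right (measure_mono inter_subset_right) _
      _ = ENNReal.ofReal ((4 * π * t) ^ (-(n : ℝ) / 2) * vB) := by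
          rw [ENNReal.ofReal_mul (by
              have : (0:ℝ) < 4 * π * t := by positivity
              positivity), hvB, ENNReal.ofReal_toReal measure_ball_lt_top.ne]
      _ ≤ ENNReal.ofReal (cB * t ^ (-(1:ℝ)/2)) := by
          apply ENNReal.ofReal_le_ofReal
          have hmul : (4 * π * t) ^ (-(n : ℝ) / 2) =
              (4*π) ^ (-(n:ℝ)/2) * t ^ (-(n:ℝ)/2) := by
            rw [← Real.mul_rpow (by positivity) ht0.le]
          have hexp : t ^ (-(n:ℝ)/2) ≤ t ^ (-(1:ℝ)/2) := by
            apply Real.rpow_le_rpow_of_exponent_le ht1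
            have : (1:ℝ) ≤ (n:ℝ) := by exact_mod_cast hn
            linarith
          rw [hmul, hcB]
          have h4 : (0:ℝ) ≤ (4*π) ^ (-(n:ℝ)/2) := by
            have : (0:ℝ) < 4*π := by positivity
            positivity
          calc (4*π) ^ (-(n:ℝ)/2) * t ^ (-(n:ℝ)/2) * vB
              ≤ (4*π) ^ (-(n:ℝ)/2) * t ^ (-(1:ℝ)/2) * vB := by
                apply mul_le_mul_of_nonneg_right
                  (mul_le_mul_of_nonneg_left hexp h4) hvB0
            _ = (4*π) ^ (-(n:ℝ)/2) * vB * t ^ (-(1:ℝ)/2) := by ring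
  -- two comparisons
  have comp1 : ∀ t ∈ Set.Ioi (1:ℝ),
      (∫⁻ y in E, ENNReal.ofReal (heatKernel n t x' y)) ≤
        (∫⁻ y in E \ Metric.ball x r, ENNReal.ofReal (heatKernel n t x y)) +
          ENNReal.ofReal (C * t ^ (-(1:ℝ)/2)) := by
    intro t ht
    have ht1 : (1:ℝ) ≤ t := le_of_lt ht
    have hsplit : (∫⁻ y in E, ENNReal.ofReal (heatKernel n t x y)) =
        (∫⁻ y in E \ Metric.ball x r, ENNReal.ofReal (heatKernel n t x y)) +
          ∫⁻ y in E ∩ Metric.ball x r, ENNReal.ofReal (heatKernel n t x y) := by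
      rw [← lintegral_union (hE.inter measurableSet_ball)
        (disjoint_sdiff_left.mono_right inter_subset_right),
        Set.diff_union_inter]
    calc (∫⁻ y in E, ENNReal.ofReal (heatKernel n t x' y))
        ≤ (∫⁻ y in E, ENNReal.ofReal (heatKernel n t x y)) +
            ENNReal.ofReal (shiftC n R * t ^ (-(1:ℝ)/2)) := lint_hk_shift ht1 hxx E
      _ = (∫⁻ y in E \ Metric.ball x r, ENNReal.ofReal (heatKernel n t x y)) +
          ((∫⁻ y in E ∩ Metric.ball x r, ENNReal.ofReal (heatKernel n t x y)) +
            ENNReal.ofReal (shiftC n R * t ^ (-(1:ℝ)/2))) := by rw [hsplit, add_assoc]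
      _ ≤ (∫⁻ y in E \ Metric.ball x r, ENNReal.ofReal (heatKernel n t x y)) +
          ENNReal.ofReal (C * t ^ (-(1:ℝ)/2)) := by
          apply add_le_add_right
          calc (∫⁻ y in E ∩ Metric.ball x r, ENNReal.ofReal (heatKernel n t x y)) +
              ENNReal.ofReal (shiftC n R * t ^ (-(1:ℝ)/2))
              ≤ ENNReal.ofReal (cB * t ^ (-(1:ℝ)/2)) +
                ENNReal.ofReal (shiftC n R * t ^ (-(1:ℝ)/2)) :=
                add_le_add_left (hball t ht) _
            _ = ENNReal.ofReal (C * t ^ (-(1:ℝ)/2)) := by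
                rw [← ENNReal.ofReal_add (by positivity) (by positivity)]
                congr 1
                rw [hC]
                ring
  have comp2 : ∀ t ∈ Set.Ioi (1:ℝ),
      (∫⁻ y in E \ Metric.ball x r, ENNReal.ofReal (heatKernel n t x y)) ≤
        (∫⁻ y in E, ENNReal.ofReal (heatKernel n t x' y)) +
          ENNReal.ofReal (C * t ^ (-(1:ℝ)/2)) := by
    intro t ht
    have ht1 : (1:ℝ) ≤ t := le_of_lt ht
    calc (∫⁻ y in E \ Metric.ball x r, ENNReal.ofReal (heatKernel n t x y))
        ≤ ∫⁻ y in E, ENNReal.ofReal (heatKernel n t x y) :=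
          lintegral_mono_set Set.diff_subset
      _ ≤ (∫⁻ y in E, ENNReal.ofReal (heatKernel n t x' y)) +
            ENNReal.ofReal (shiftC n R * t ^ (-(1:ℝ)/2)) := lint_hk_shift ht1 hxx' E
      _ ≤ (∫⁻ y in E, ENNReal.ofReal (heatKernel n t x' y)) +
            ENNReal.ofReal (C * t ^ (-(1:ℝ)/2)) := by
          apply add_le_add_right
          apply ENNReal.ofReal_le_ofReal
          have hrp : (0:ℝ) ≤ t ^ (-(1:ℝ)/2) :=
            Real.rpow_nonneg (by linarith) _
          nlinarith
  -- abstract integral comparison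
  have key : ∀ (f g : ℝ → ℝ≥0∞), (∀ t ∈ Set.Ioi (1:ℝ), f t ≤ g t +
      ENNReal.ofReal (C * t ^ (-(1:ℝ)/2))) → ∀ s ∈ Set.Ioi (0:ℝ),
      (ENNReal.ofReal s * ∫⁻ t in Set.Ioi (1:ℝ),
        ENNReal.ofReal (t ^ (-(1 + s))) * f t) ≤
      (ENNReal.ofReal s * ∫⁻ t in Set.Ioi (1:ℝ),
        ENNReal.ofReal (t ^ (-(1 + s))) * g t) +
          ENNReal.ofReal s * ENNReal.ofReal (2*C) :=
    fun f g hfg s hs => sandwich_tail hC0 f g hfg hs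
  -- limits of the error
  have εlim : Tendsto (fun s : ℝ => ENNReal.ofReal s * ENNReal.ofReal (2*C))
      (𝓝[>] (0:ℝ)) (𝓝 0) := tendsto_ofReal_mul_const_zero _ ENNReal.ofReal_ne_top
  have up : Tendsto (fun s : ℝ => ENNReal.ofReal s * LambdaE n E x r s +
      ENNReal.ofReal s * ENNReal.ofReal (2*C)) (𝓝[>] (0:ℝ)) (𝓝 ΞE) := by
    have := hΞ.add εlim
    simpa using this
  have low : Tendsto (fun s : ℝ => ENNReal.ofReal s * LambdaE n E x r s -
      ENNReal.ofReal s * ENNReal.ofReal (2*C)) (𝓝[>] (0:ℝ)) (𝓝 ΞE) := by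
    have := ENNReal.Tendsto.sub hΞ εlim (Or.inr (by simp))
    simpa using this
  refine tendsto_of_tendsto_of_tendsto_of_le_of_le' low up ?_ ?_
  · filter_upwards [self_mem_nhdsWithin] with s hs
    rw [tsub_le_iff_right]
    exact key _ _ comp2 s hs
  · filter_upwards [self_mem_nhdsWithin] with s hs
    exact key _ _ comp1 s hs

lemma tendsto_W (n : ℕ) (hn : 1 ≤ n) {E : Set (EuclideanSpace ℝ (Fin n))}
    (hE : MeasurableSet E) {x : EuclideanSpace ℝ (Fin n)} {r : ℝ} (hr : 0 < r)
    {ΞE : ℝ≥0∞}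
    (hΞ : Tendsto (fun s : ℝ => ENNReal.ofReal s * LambdaE n E x r s)
      (𝓝[>] (0:ℝ)) (𝓝 ΞE))
    {W : Set (EuclideanSpace ℝ (Fin n))} (hW : MeasurableSet W) {R : ℝ}
    (hWR : ∀ x' ∈ W, ‖x - x'‖ ≤ R) (hWfin : volume W < ⊤) :
    Tendsto (fun s : ℝ => ENNReal.ofReal s * ∫⁻ t in Set.Ioi (1:ℝ),
      ENNReal.ofReal (t ^ (-(1 + s))) *
        ∫⁻ x' in W, ∫⁻ y in E, ENNReal.ofReal (heatKernel n t x' y))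
      (𝓝[>] (0:ℝ)) (𝓝 (ΞE * volume W)) := by
  have hmeasΦ : ∀ s : ℝ, Measurable fun x' : EuclideanSpace ℝ (Fin n) =>
      ENNReal.ofReal s * ∫⁻ t in Set.Ioi (1:ℝ), ENNReal.ofReal (t ^ (-(1 + s))) *
        ∫⁻ y in E, ENNReal.ofReal (heatKernel n t x' y) := by
    intro s
    apply Measurable.const_mul
    apply Measurable.lintegral_prod_right'
      (f := fun p : EuclideanSpace ℝ (Fin n) × ℝ => ENNReal.ofReal (p.2 ^ (-(1 + s))) *
        ∫⁻ y in E, ENNReal.ofReal (heatKernel n p.2 p.1 y))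
    exact ((measurable_snd.pow_const _).ennreal_ofReal).mul
      ((measurable_inner_tx n E).comp (measurable_snd.prodMk measurable_fst))
  have hrw : ∀ s : ℝ, (ENNReal.ofReal s * ∫⁻ t in Set.Ioi (1:ℝ),
      ENNReal.ofReal (t ^ (-(1 + s))) *
        ∫⁻ x' in W, ∫⁻ y in E, ENNReal.ofReal (heatKernel n t x' y)) =
      ∫⁻ x' in W, ENNReal.ofReal s * ∫⁻ t in Set.Ioi (1:ℝ),
        ENNReal.ofReal (t ^ (-(1 + s))) *
          ∫⁻ y in E, ENNReal.ofReal (heatKernel n t x' y) := by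
    intro s
    have hin : ∀ t : ℝ, ENNReal.ofReal (t ^ (-(1 + s))) *
        ∫⁻ x' in W, (∫⁻ y in E, ENNReal.ofReal (heatKernel n t x' y)) =
        ∫⁻ x' in W, ENNReal.ofReal (t ^ (-(1 + s))) *
          ∫⁻ y in E, ENNReal.ofReal (heatKernel n t x' y) := by
      intro t
      rw [lintegral_const_mul _ (measurable_inner_x n t E)]
    simp_rw [hin]
    rw [lintegral_lintegral_swap]
    · rw [lintegral_const_mul _ (Measurable.lintegral_prod_right'
        (f := fun p : EuclideanSpace ℝ (Fin n) × ℝ => ENNReal.ofReal (p.2 ^ (-(1 + s))) *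
          ∫⁻ y in E, ENNReal.ofReal (heatKernel n p.2 p.1 y))
        (((measurable_snd.pow_const _).ennreal_ofReal).mul
          ((measurable_inner_tx n E).comp (measurable_snd.prodMk measurable_fst))))]
    · apply Measurable.aemeasurable
      exact ((measurable_fst.pow_const _).ennreal_ofReal).mul (measurable_inner_tx n E)
  have hDCT : Tendsto (fun s : ℝ => ∫⁻ x' in W,
      (ENNReal.ofReal s * ∫⁻ t in Set.Ioi (1:ℝ), ENNReal.ofReal (t ^ (-(1 + s))) *
        ∫⁻ y in E, ENNReal.ofReal (heatKernel n t x' y)))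
      (𝓝[>] (0:ℝ)) (𝓝 (∫⁻ _ in W, ΞE)) := by
    apply tendsto_lintegral_filter_of_dominated_convergence (fun _ => 1)
    · exact Eventually.of_forall hmeasΦ
    · filter_upwards [self_mem_nhdsWithin] with s hs
      apply ae_of_all
      intro x'
      have hmono : (∫⁻ t in Set.Ioi (1:ℝ), ENNReal.ofReal (t ^ (-(1 + s))) *
          ∫⁻ y in E, ENNReal.ofReal (heatKernel n t x' y)) ≤
          ∫⁻ t in Set.Ioi (1:ℝ), ENNReal.ofReal (t ^ (-(1 + s))) := by
        apply setLIntegral_mono' measurableSet_Ioi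
        intro t ht
        calc ENNReal.ofReal (t ^ (-(1 + s))) *
            ∫⁻ y in E, ENNReal.ofReal (heatKernel n t x' y)
            ≤ ENNReal.ofReal (t ^ (-(1 + s))) * 1 :=
              mul_le_mul_right (lint_hk_set_le_one (lt_trans one_pos ht) x' E) _
          _ = ENNReal.ofReal (t ^ (-(1 + s))) := mul_one _
      calc ENNReal.ofReal s * ∫⁻ t in Set.Ioi (1:ℝ), ENNReal.ofReal (t ^ (-(1 + s))) *
            ∫⁻ y in E, ENNReal.ofReal (heatKernel n t x' y)
          ≤ ENNReal.ofReal s * ENNReal.ofReal (1/s) := by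
            rw [← tint hs]
            exact mul_le_mul_right hmono _
        _ = 1 := by
            rw [← ENNReal.ofReal_mul (le_of_lt hs), mul_one_div_cancel (ne_of_gt hs),
              ENNReal.ofReal_one]
    · rw [lintegral_one, Measure.restrict_apply_univ]
      exact hWfin.ne
    · refine (ae_restrict_mem hW).mono fun x' hx' => ?_
      exact tendsto_pointwise n hn hE hr hΞ (hWR x' hx')
  rw [setLIntegral_const W ΞE] at hDCT
  refine Tendsto.congr (fun s => (hrw s).symm) hDCT

lemma tendsto_I0_general (D : ℝ → ℝ≥0∞) {s₀ : ℝ} (hs₀ : 0 < s₀)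
    (hfin : (∫⁻ t in Set.Ioc (0:ℝ) 1, ENNReal.ofReal (t ^ (-(1+s₀))) * D t) ≠ ⊤) :
    Tendsto (fun s : ℝ => ENNReal.ofReal s *
      ∫⁻ t in Set.Ioc (0:ℝ) 1, ENNReal.ofReal (t ^ (-(1+s))) * D t)
      (𝓝[>] (0:ℝ)) (𝓝 0) := by
  set K := ∫⁻ t in Set.Ioc (0:ℝ) 1, ENNReal.ofReal (t ^ (-(1+s₀))) * D t with hK
  have upper : Tendsto (fun s : ℝ => ENNReal.ofReal s * K) (𝓝[>] (0:ℝ)) (𝓝 0) :=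
    tendsto_ofReal_mul_const_zero K hfin
  refine tendsto_of_tendsto_of_tendsto_of_le_of_le' tendsto_const_nhds upper
    (Eventually.of_forall fun s => by positivity) ?_
  filter_upwards [Ioc_mem_nhdsGT hs₀] with s hs
  have hmono : (∫⁻ t in Set.Ioc (0:ℝ) 1, ENNReal.ofReal (t ^ (-(1+s))) * D t) ≤ K := by
    rw [hK]
    apply setLIntegral_mono' measurableSet_Ioc
    intro t ht
    apply mul_le_mul_left
    apply ENNReal.ofReal_le_ofReal
    exact Real.rpow_le_rpow_of_exponent_ge ht.1 ht.2 (by linarith [hs.2])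
  exact mul_le_mul_right hmono _

lemma Lfun_split (n : ℕ) (s : ℝ) (A B : Set (EuclideanSpace ℝ (Fin n))) :
    Lfun n s A B = (∫⁻ t in Set.Ioc (0:ℝ) 1, ENNReal.ofReal (t ^ (-(1 + s))) *
      ∫⁻ x in A, ∫⁻ y in B, ENNReal.ofReal (heatKernel n t x y)) +
      ∫⁻ t in Set.Ioi (1:ℝ), ENNReal.ofReal (t ^ (-(1 + s))) *
        ∫⁻ x in A, ∫⁻ y in B, ENNReal.ofReal (heatKernel n t x y) := by
  unfold Lfun
  rw [← Set.Ioc_union_Ioi_eq_Ioi (zero_le_one (α := ℝ)),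
    lintegral_union measurableSet_Ioi Set.Ioc_disjoint_Ioi_same]

lemma double_swap (n : ℕ) (t : ℝ) (A B : Set (EuclideanSpace ℝ (Fin n))) :
    (∫⁻ x in A, ∫⁻ y in B, ENNReal.ofReal (heatKernel n t x y)) =
      ∫⁻ x in B, ∫⁻ y in A, ENNReal.ofReal (heatKernel n t x y) := by
  rw [lintegral_lintegral_swap]
  · apply lintegral_congr
    intro y
    apply lintegral_congr
    intro x
    rw [hk_symm]
  · apply Measurable.aemeasurable
    exact (measurable_hk n).comp (measurable_const.prodMk
      (measurable_fst.prodMk measurable_snd))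

/-- For `t ≥ 1`, double integral over two finite-volume sets is `≲ t^{-1/2}`. -/
lemma double_small (n : ℕ) (hn : 1 ≤ n) {t : ℝ} (ht : t ∈ Set.Ioi (1:ℝ))
    (V W : Set (EuclideanSpace ℝ (Fin n))) (hV : volume V ≠ ⊤) (hW : volume W ≠ ⊤) :
    (∫⁻ x' in W, ∫⁻ y in V, ENNReal.ofReal (heatKernel n t x' y)) ≤
      ENNReal.ofReal (((4*π) ^ (-(n:ℝ)/2) * (volume V).toReal * (volume W).toReal) *
        t ^ (-(1:ℝ)/2)) := by
  have ht1 : (1:ℝ) ≤ t := le_of_lt ht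
  have ht0 : (0:ℝ) < t := lt_trans one_pos ht
  have h4πt : (0:ℝ) < 4 * π * t := by positivity
  have h4π : (0:ℝ) < 4 * π := by positivity
  set vV := (volume V).toReal with hvV
  set vW := (volume W).toReal with hvW
  have hvV0 : 0 ≤ vV := ENNReal.toReal_nonneg
  have hvW0 : 0 ≤ vW := ENNReal.toReal_nonneg
  have hstep : ∀ x' : EuclideanSpace ℝ (Fin n),
      (∫⁻ y in V, ENNReal.ofReal (heatKernel n t x' y)) ≤
        ENNReal.ofReal ((4 * π * t) ^ (-(n:ℝ)/2) * vV) := by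
    intro x'
    calc (∫⁻ y in V, ENNReal.ofReal (heatKernel n t x' y))
        ≤ ENNReal.ofReal ((4 * π * t) ^ (-(n : ℝ) / 2)) * volume V :=
          lint_hk_set_le_vol ht0 x' V
      _ = ENNReal.ofReal ((4 * π * t) ^ (-(n:ℝ)/2) * vV) := by
          rw [ENNReal.ofReal_mul (by positivity), hvV, ENNReal.ofReal_toReal hV]
  calc (∫⁻ x' in W, ∫⁻ y in V, ENNReal.ofReal (heatKernel n t x' y))
      ≤ ∫⁻ _ in W, ENNReal.ofReal ((4 * π * t) ^ (-(n:ℝ)/2) * vV) :=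
        lintegral_mono fun x' => hstep x'
    _ = ENNReal.ofReal ((4 * π * t) ^ (-(n:ℝ)/2) * vV) * volume W := setLIntegral_const _ _
    _ = ENNReal.ofReal ((4 * π * t) ^ (-(n:ℝ)/2) * vV * vW) := by
        rw [← ENNReal.ofReal_toReal hW, ← hvW, ← ENNReal.ofReal_mul (by positivity)]
    _ ≤ ENNReal.ofReal (((4*π) ^ (-(n:ℝ)/2) * vV * vW) * t ^ (-(1:ℝ)/2)) := by
        apply ENNReal.ofReal_le_ofReal
        have hmul : (4 * π * t) ^ (-(n : ℝ) / 2) =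
            (4*π) ^ (-(n:ℝ)/2) * t ^ (-(n:ℝ)/2) := by
          rw [← Real.mul_rpow h4π.le ht0.le]
        have hexp : t ^ (-(n:ℝ)/2) ≤ t ^ (-(1:ℝ)/2) := by
          apply Real.rpow_le_rpow_of_exponent_le ht1
          have : (1:ℝ) ≤ (n:ℝ) := by exact_mod_cast hn
          linarith
        rw [hmul]
        have h4r : (0:ℝ) ≤ (4*π) ^ (-(n:ℝ)/2) := by positivity
        calc (4*π) ^ (-(n:ℝ)/2) * t ^ (-(n:ℝ)/2) * vV * vW
            ≤ (4*π) ^ (-(n:ℝ)/2) * t ^ (-(1:ℝ)/2) * vV * vW := by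
              apply mul_le_mul_of_nonneg_right (mul_le_mul_of_nonneg_right
                (mul_le_mul_of_nonneg_left hexp h4r) hvV0) hvW0
          _ = (4*π) ^ (-(n:ℝ)/2) * vV * vW * t ^ (-(1:ℝ)/2) := by ring

end S14

open S14 in
/-- for `Ω` open and bounded, `E` measurable with `Per_{s₀}(E,Ω) < ∞` for some
`s₀ ∈ (0,1/2)`, if `Ξ_E = lim_{s→0⁺} s Λ_E(x,r,s)` exists, then
`lim_{s→0⁺} s Per_s(E,Ω) = 2[(1−Ξ_E) 𝓛ⁿ(E∩Ω) + Ξ_E 𝓛ⁿ(Eᶜ∩Ω)]`. -/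
theorem statement14 (n : ℕ) (hn : 1 ≤ n) (Ω : Set (EuclideanSpace ℝ (Fin n)))
    (hΩo : IsOpen Ω) (hΩb : Bornology.IsBounded Ω)
    (E : Set (EuclideanSpace ℝ (Fin n))) (hE : MeasurableSet E)
    (s₀ : ℝ) (hs₀ : s₀ ∈ Set.Ioo (0:ℝ) (1/2)) (hfin : sPer n s₀ E Ω < ⊤)
    (ΞE : ℝ≥0∞) (x : EuclideanSpace ℝ (Fin n)) (r : ℝ) (hr : 0 < r)
    (hΞ : Tendsto (fun s : ℝ => ENNReal.ofReal s * LambdaE n E x r s)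
      (𝓝[>] (0:ℝ)) (𝓝 ΞE)) :
    Tendsto (fun s : ℝ => ENNReal.ofReal s * sPer n s E Ω) (𝓝[>] (0:ℝ))
      (𝓝 (2 * ((1 - ΞE) * volume (E ∩ Ω) + ΞE * volume (Eᶜ ∩ Ω)))) := by
  obtain ⟨hs₀0, hs₀h⟩ := hs₀
  have hΩm : MeasurableSet Ω := hΩo.measurableSet
  have hΩfin : volume Ω < ⊤ := hΩb.measure_lt_top
  have hv1 : volume (E ∩ Ω) < ⊤ := lt_of_le_of_lt (measure_mono inter_subset_right) hΩfin
  have hv2 : volume (Eᶜ ∩ Ω) < ⊤ := lt_of_le_of_lt (measure_mono inter_subset_right) hΩfin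
  obtain ⟨R, hRsub⟩ := hΩb.subset_closedBall x
  have hWR1 : ∀ x' ∈ E ∩ Ω, ‖x - x'‖ ≤ R := by
    intro x' hx'
    have h := hRsub hx'.2
    rw [Metric.mem_closedBall] at h
    calc ‖x - x'‖ = dist x' x := by rw [dist_eq_norm, norm_sub_rev]
      _ ≤ R := h
  have hWR2 : ∀ x' ∈ Eᶜ ∩ Ω, ‖x - x'‖ ≤ R := by
    intro x' hx'
    have h := hRsub hx'.2
    rw [Metric.mem_closedBall] at h
    calc ‖x - x'‖ = dist x' x := by rw [dist_eq_norm, norm_sub_rev]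
      _ ≤ R := h
  -- finiteness of the three s₀-pieces
  have hsum : Lfun n s₀ (E ∩ Ω) (Eᶜ ∩ Ω) + Lfun n s₀ (E ∩ Ω) (Eᶜ ∩ Ωᶜ) +
      Lfun n s₀ (E ∩ Ωᶜ) (Eᶜ ∩ Ω) < ⊤ := by
    refine lt_of_le_of_lt ?_ hfin
    unfold sPer
    calc Lfun n s₀ (E ∩ Ω) (Eᶜ ∩ Ω) + Lfun n s₀ (E ∩ Ω) (Eᶜ ∩ Ωᶜ) +
        Lfun n s₀ (E ∩ Ωᶜ) (Eᶜ ∩ Ω)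
        = 1 * (Lfun n s₀ (E ∩ Ω) (Eᶜ ∩ Ω) + Lfun n s₀ (E ∩ Ω) (Eᶜ ∩ Ωᶜ) +
            Lfun n s₀ (E ∩ Ωᶜ) (Eᶜ ∩ Ω)) := (one_mul _).symm
      _ ≤ 2 * (Lfun n s₀ (E ∩ Ω) (Eᶜ ∩ Ω) + Lfun n s₀ (E ∩ Ω) (Eᶜ ∩ Ωᶜ) +
            Lfun n s₀ (E ∩ Ωᶜ) (Eᶜ ∩ Ω)) := mul_le_mul_left one_le_two _
  have hfin1 : Lfun n s₀ (E ∩ Ω) (Eᶜ ∩ Ω) ≠ ⊤ :=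
    (lt_of_le_of_lt (le_add_right (le_add_right le_rfl)) hsum).ne
  have hfin2 : Lfun n s₀ (E ∩ Ω) (Eᶜ ∩ Ωᶜ) ≠ ⊤ :=
    (lt_of_le_of_lt (le_add_right le_add_self) hsum).ne
  have hfin3 : Lfun n s₀ (E ∩ Ωᶜ) (Eᶜ ∩ Ω) ≠ ⊤ :=
    (lt_of_le_of_lt le_add_self hsum).ne
  have hI0fin1 : (∫⁻ t in Set.Ioc (0:ℝ) 1, ENNReal.ofReal (t ^ (-(1 + s₀))) *
      ∫⁻ x' in E ∩ Ω, ∫⁻ y in Eᶜ ∩ Ω, ENNReal.ofReal (heatKernel n t x' y)) ≠ ⊤ := by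
    refine ne_top_of_le_ne_top hfin1 ?_
    rw [Lfun_split n s₀ (E ∩ Ω) (Eᶜ ∩ Ω)]
    exact le_self_add
  have hI0fin2 : (∫⁻ t in Set.Ioc (0:ℝ) 1, ENNReal.ofReal (t ^ (-(1 + s₀))) *
      ∫⁻ x' in E ∩ Ω, ∫⁻ y in Eᶜ ∩ Ωᶜ, ENNReal.ofReal (heatKernel n t x' y)) ≠ ⊤ := by
    refine ne_top_of_le_ne_top hfin2 ?_
    rw [Lfun_split n s₀ (E ∩ Ω) (Eᶜ ∩ Ωᶜ)]
    exact le_self_add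
  have hI0fin3 : (∫⁻ t in Set.Ioc (0:ℝ) 1, ENNReal.ofReal (t ^ (-(1 + s₀))) *
      ∫⁻ x' in E ∩ Ωᶜ, ∫⁻ y in Eᶜ ∩ Ω, ENNReal.ofReal (heatKernel n t x' y)) ≠ ⊤ := by
    refine ne_top_of_le_ne_top hfin3 ?_
    rw [Lfun_split n s₀ (E ∩ Ωᶜ) (Eᶜ ∩ Ω)]
    exact le_self_add
  -- A-part: small times tend to zero
  have TA1 := tendsto_I0_general (fun t => ∫⁻ x' in E ∩ Ω, ∫⁻ y in Eᶜ ∩ Ω,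
    ENNReal.ofReal (heatKernel n t x' y)) hs₀0 hI0fin1
  have TA2 := tendsto_I0_general (fun t => ∫⁻ x' in E ∩ Ω, ∫⁻ y in Eᶜ ∩ Ωᶜ,
    ENNReal.ofReal (heatKernel n t x' y)) hs₀0 hI0fin2
  have TA3 := tendsto_I0_general (fun t => ∫⁻ x' in E ∩ Ωᶜ, ∫⁻ y in Eᶜ ∩ Ω,
    ENNReal.ofReal (heatKernel n t x' y)) hs₀0 hI0fin3
  have TA : Tendsto (fun s : ℝ =>
      (ENNReal.ofReal s * ∫⁻ t in Set.Ioc (0:ℝ) 1, ENNReal.ofReal (t ^ (-(1 + s))) *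
        ∫⁻ x' in E ∩ Ω, ∫⁻ y in Eᶜ ∩ Ω, ENNReal.ofReal (heatKernel n t x' y)) +
      (ENNReal.ofReal s * ∫⁻ t in Set.Ioc (0:ℝ) 1, ENNReal.ofReal (t ^ (-(1 + s))) *
        ∫⁻ x' in E ∩ Ω, ∫⁻ y in Eᶜ ∩ Ωᶜ, ENNReal.ofReal (heatKernel n t x' y)) +
      (ENNReal.ofReal s * ∫⁻ t in Set.Ioc (0:ℝ) 1, ENNReal.ofReal (t ^ (-(1 + s))) *
        ∫⁻ x' in E ∩ Ωᶜ, ∫⁻ y in Eᶜ ∩ Ω, ENNReal.ofReal (heatKernel n t x' y)))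
      (𝓝[>] (0:ℝ)) (𝓝 0) := by
    have h := (TA1.add TA2).add TA3
    simpa using h
  -- measurability of time-kernel products
  have hmc : ∀ s : ℝ, Measurable fun t : ℝ => ENNReal.ofReal (t ^ (-(1 + s))) :=
    fun s => (measurable_id'.pow_const _).ennreal_ofReal
  -- t-level additivity for the first two pairs
  have hD12 : ∀ t : ℝ,
      ((∫⁻ x' in E ∩ Ω, ∫⁻ y in Eᶜ ∩ Ω, ENNReal.ofReal (heatKernel n t x' y)) +
        ∫⁻ x' in E ∩ Ω, ∫⁻ y in Eᶜ ∩ Ωᶜ, ENNReal.ofReal (heatKernel n t x' y)) =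
      ∫⁻ x' in E ∩ Ω, ∫⁻ y in Eᶜ, ENNReal.ofReal (heatKernel n t x' y) := by
    intro t
    rw [← lintegral_add_left (measurable_inner_x n t (Eᶜ ∩ Ω))]
    apply lintegral_congr
    intro x'
    rw [← lintegral_union (hE.compl.inter hΩm.compl)
      (disjoint_compl_right.mono inter_subset_right inter_subset_right),
      Set.inter_union_compl]
  have hDC : ∀ t ∈ Set.Ioi (1:ℝ),
      ((∫⁻ x' in E ∩ Ω, ∫⁻ y in Eᶜ, ENNReal.ofReal (heatKernel n t x' y)) +
        ∫⁻ x' in E ∩ Ω, ∫⁻ y in E, ENNReal.ofReal (heatKernel n t x' y)) =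
      volume (E ∩ Ω) := by
    intro t ht
    have ht0 : (0:ℝ) < t := lt_trans one_pos ht
    rw [← lintegral_add_left (measurable_inner_x n t Eᶜ)]
    have hone : ∀ x' : EuclideanSpace ℝ (Fin n),
        ((∫⁻ y in Eᶜ, ENNReal.ofReal (heatKernel n t x' y)) +
          ∫⁻ y in E, ENNReal.ofReal (heatKernel n t x' y)) = 1 := by
      intro x'
      rw [add_comm, lintegral_add_compl _ hE]
      exact lint_hk_total ht0 x'
    calc ∫⁻ x' in E ∩ Ω, ((∫⁻ y in Eᶜ, ENNReal.ofReal (heatKernel n t x' y)) +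
          ∫⁻ y in E, ENNReal.ofReal (heatKernel n t x' y))
        = ∫⁻ _ in E ∩ Ω, 1 := lintegral_congr fun x' => hone x'
      _ = volume (E ∩ Ω) := setLIntegral_one _
  -- the key identity for s > 0
  have hid : ∀ s : ℝ, 0 < s →
      ((ENNReal.ofReal s * ∫⁻ t in Set.Ioi (1:ℝ), ENNReal.ofReal (t ^ (-(1 + s))) *
        ∫⁻ x' in E ∩ Ω, ∫⁻ y in Eᶜ ∩ Ω, ENNReal.ofReal (heatKernel n t x' y)) +
      (ENNReal.ofReal s * ∫⁻ t in Set.Ioi (1:ℝ), ENNReal.ofReal (t ^ (-(1 + s))) *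
        ∫⁻ x' in E ∩ Ω, ∫⁻ y in Eᶜ ∩ Ωᶜ, ENNReal.ofReal (heatKernel n t x' y))) +
      (ENNReal.ofReal s * ∫⁻ t in Set.Ioi (1:ℝ), ENNReal.ofReal (t ^ (-(1 + s))) *
        ∫⁻ x' in E ∩ Ω, ∫⁻ y in E, ENNReal.ofReal (heatKernel n t x' y)) =
      volume (E ∩ Ω) := by
    intro s hs
    have h12 : ((∫⁻ t in Set.Ioi (1:ℝ), ENNReal.ofReal (t ^ (-(1 + s))) *
        ∫⁻ x' in E ∩ Ω, ∫⁻ y in Eᶜ ∩ Ω, ENNReal.ofReal (heatKernel n t x' y)) +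
        ∫⁻ t in Set.Ioi (1:ℝ), ENNReal.ofReal (t ^ (-(1 + s))) *
          ∫⁻ x' in E ∩ Ω, ∫⁻ y in Eᶜ ∩ Ωᶜ, ENNReal.ofReal (heatKernel n t x' y)) =
        ∫⁻ t in Set.Ioi (1:ℝ), ENNReal.ofReal (t ^ (-(1 + s))) *
          ∫⁻ x' in E ∩ Ω, ∫⁻ y in Eᶜ, ENNReal.ofReal (heatKernel n t x' y) := by
      rw [← lintegral_add_left (f := fun t => ENNReal.ofReal (t ^ (-(1 + s))) *
          ∫⁻ x' in E ∩ Ω, ∫⁻ y in Eᶜ ∩ Ω, ENNReal.ofReal (heatKernel n t x' y))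
        ((hmc s).mul (measurable_double_t n (E ∩ Ω) (Eᶜ ∩ Ω)))]
      apply lintegral_congr
      intro t
      rw [← mul_add, hD12 t]
    have hC : ((∫⁻ t in Set.Ioi (1:ℝ), ENNReal.ofReal (t ^ (-(1 + s))) *
        ∫⁻ x' in E ∩ Ω, ∫⁻ y in Eᶜ, ENNReal.ofReal (heatKernel n t x' y)) +
        ∫⁻ t in Set.Ioi (1:ℝ), ENNReal.ofReal (t ^ (-(1 + s))) *
          ∫⁻ x' in E ∩ Ω, ∫⁻ y in E, ENNReal.ofReal (heatKernel n t x' y)) =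
        ENNReal.ofReal (1/s) * volume (E ∩ Ω) := by
      rw [← lintegral_add_left (f := fun t => ENNReal.ofReal (t ^ (-(1 + s))) *
          ∫⁻ x' in E ∩ Ω, ∫⁻ y in Eᶜ, ENNReal.ofReal (heatKernel n t x' y))
        ((hmc s).mul (measurable_double_t n (E ∩ Ω) Eᶜ))]
      have hptw : ∫⁻ t in Set.Ioi (1:ℝ),
          (ENNReal.ofReal (t ^ (-(1 + s))) *
            (∫⁻ x' in E ∩ Ω, ∫⁻ y in Eᶜ, ENNReal.ofReal (heatKernel n t x' y)) +
          ENNReal.ofReal (t ^ (-(1 + s))) *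
            ∫⁻ x' in E ∩ Ω, ∫⁻ y in E, ENNReal.ofReal (heatKernel n t x' y)) =
          ∫⁻ t in Set.Ioi (1:ℝ), ENNReal.ofReal (t ^ (-(1 + s))) * volume (E ∩ Ω) := by
        apply setLIntegral_congr_fun measurableSet_Ioi
        intro t ht
        beta_reduce
        rw [← mul_add, hDC t ht]
      rw [hptw, lintegral_mul_const _ (hmc s), tint hs]
    calc ((ENNReal.ofReal s * ∫⁻ t in Set.Ioi (1:ℝ), ENNReal.ofReal (t ^ (-(1 + s))) *
          ∫⁻ x' in E ∩ Ω, ∫⁻ y in Eᶜ ∩ Ω, ENNReal.ofReal (heatKernel n t x' y)) +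
        (ENNReal.ofReal s * ∫⁻ t in Set.Ioi (1:ℝ), ENNReal.ofReal (t ^ (-(1 + s))) *
          ∫⁻ x' in E ∩ Ω, ∫⁻ y in Eᶜ ∩ Ωᶜ, ENNReal.ofReal (heatKernel n t x' y))) +
        (ENNReal.ofReal s * ∫⁻ t in Set.Ioi (1:ℝ), ENNReal.ofReal (t ^ (-(1 + s))) *
          ∫⁻ x' in E ∩ Ω, ∫⁻ y in E, ENNReal.ofReal (heatKernel n t x' y))
        = ENNReal.ofReal s * (((∫⁻ t in Set.Ioi (1:ℝ), ENNReal.ofReal (t ^ (-(1 + s))) *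
            ∫⁻ x' in E ∩ Ω, ∫⁻ y in Eᶜ ∩ Ω, ENNReal.ofReal (heatKernel n t x' y)) +
          ∫⁻ t in Set.Ioi (1:ℝ), ENNReal.ofReal (t ^ (-(1 + s))) *
            ∫⁻ x' in E ∩ Ω, ∫⁻ y in Eᶜ ∩ Ωᶜ, ENNReal.ofReal (heatKernel n t x' y)) +
          ∫⁻ t in Set.Ioi (1:ℝ), ENNReal.ofReal (t ^ (-(1 + s))) *
            ∫⁻ x' in E ∩ Ω, ∫⁻ y in E, ENNReal.ofReal (heatKernel n t x' y)) := by ring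
      _ = ENNReal.ofReal s * (ENNReal.ofReal (1/s) * volume (E ∩ Ω)) := by
          rw [h12, hC]
      _ = volume (E ∩ Ω) := by
          rw [← mul_assoc, ← ENNReal.ofReal_mul (le_of_lt hs),
            mul_one_div_cancel (ne_of_gt hs), ENNReal.ofReal_one, one_mul]
  have hJ1lim := tendsto_W n hn hE hr hΞ (hE.inter hΩm) hWR1 hv1
  have TB12 : Tendsto (fun s : ℝ =>
      (ENNReal.ofReal s * ∫⁻ t in Set.Ioi (1:ℝ), ENNReal.ofReal (t ^ (-(1 + s))) *
        ∫⁻ x' in E ∩ Ω, ∫⁻ y in Eᶜ ∩ Ω, ENNReal.ofReal (heatKernel n t x' y)) +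
      (ENNReal.ofReal s * ∫⁻ t in Set.Ioi (1:ℝ), ENNReal.ofReal (t ^ (-(1 + s))) *
        ∫⁻ x' in E ∩ Ω, ∫⁻ y in Eᶜ ∩ Ωᶜ, ENNReal.ofReal (heatKernel n t x' y)))
      (𝓝[>] (0:ℝ)) (𝓝 (volume (E ∩ Ω) - ΞE * volume (E ∩ Ω))) := by
    have hbase : Tendsto (fun s : ℝ => volume (E ∩ Ω) -
        ENNReal.ofReal s * ∫⁻ t in Set.Ioi (1:ℝ), ENNReal.ofReal (t ^ (-(1 + s))) *
          ∫⁻ x' in E ∩ Ω, ∫⁻ y in E, ENNReal.ofReal (heatKernel n t x' y))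
        (𝓝[>] (0:ℝ)) (𝓝 (volume (E ∩ Ω) - ΞE * volume (E ∩ Ω))) :=
      ENNReal.Tendsto.sub tendsto_const_nhds hJ1lim (Or.inl hv1.ne)
    refine hbase.congr' ?_
    filter_upwards [self_mem_nhdsWithin] with s hs
    have hs0 : (0:ℝ) < s := hs
    have hJne : (ENNReal.ofReal s * ∫⁻ t in Set.Ioi (1:ℝ),
        ENNReal.ofReal (t ^ (-(1 + s))) *
          ∫⁻ x' in E ∩ Ω, ∫⁻ y in E, ENNReal.ofReal (heatKernel n t x' y)) ≠ ⊤ := by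
      intro hcontra
      have := hid s hs0
      rw [hcontra, add_top] at this
      exact hv1.ne this.symm
    exact (ENNReal.eq_sub_of_add_eq hJne (hid s hs0)).symm
  -- B3 part
  have hB3eq : ∀ s : ℝ, (ENNReal.ofReal s * ∫⁻ t in Set.Ioi (1:ℝ),
      ENNReal.ofReal (t ^ (-(1 + s))) *
        ∫⁻ x' in E ∩ Ωᶜ, ∫⁻ y in Eᶜ ∩ Ω, ENNReal.ofReal (heatKernel n t x' y)) =
      ENNReal.ofReal s * ∫⁻ t in Set.Ioi (1:ℝ), ENNReal.ofReal (t ^ (-(1 + s))) *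
        ∫⁻ x' in Eᶜ ∩ Ω, ∫⁻ y in E ∩ Ωᶜ, ENNReal.ofReal (heatKernel n t x' y) := by
    intro s
    congr 1
    apply lintegral_congr
    intro t
    rw [double_swap n t (E ∩ Ωᶜ) (Eᶜ ∩ Ω)]
  have hH2eq : ∀ t : ℝ,
      (∫⁻ x' in Eᶜ ∩ Ω, ∫⁻ y in E, ENNReal.ofReal (heatKernel n t x' y)) =
      (∫⁻ x' in Eᶜ ∩ Ω, ∫⁻ y in E ∩ Ωᶜ, ENNReal.ofReal (heatKernel n t x' y)) +
        ∫⁻ x' in Eᶜ ∩ Ω, ∫⁻ y in E ∩ Ω, ENNReal.ofReal (heatKernel n t x' y) := by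
    intro t
    have hset : E ∩ Ωᶜ ∪ E ∩ Ω = E := by
      rw [Set.union_comm]; exact Set.inter_union_compl E Ω
    rw [← lintegral_add_left (measurable_inner_x n t (E ∩ Ωᶜ))]
    apply lintegral_congr
    intro x'
    rw [← lintegral_union (hE.inter hΩm)
      (disjoint_compl_left.mono inter_subset_right inter_subset_right), hset]
  set cS := (4*π) ^ (-(n:ℝ)/2) * (volume (E ∩ Ω)).toReal * (volume (Eᶜ ∩ Ω)).toReal with hcS
  have hcS0 : 0 ≤ cS := by
    have h4π : (0:ℝ) < 4*π := by positivity
    have h1 : (0:ℝ) ≤ (volume (E ∩ Ω)).toReal := ENNReal.toReal_nonneg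
    have h2 : (0:ℝ) ≤ (volume (Eᶜ ∩ Ω)).toReal := ENNReal.toReal_nonneg
    positivity
  have hH2le : ∀ t ∈ Set.Ioi (1:ℝ),
      (∫⁻ x' in Eᶜ ∩ Ω, ∫⁻ y in E, ENNReal.ofReal (heatKernel n t x' y)) ≤
      (∫⁻ x' in Eᶜ ∩ Ω, ∫⁻ y in E ∩ Ωᶜ, ENNReal.ofReal (heatKernel n t x' y)) +
        ENNReal.ofReal (cS * t ^ (-(1:ℝ)/2)) := by
    intro t ht
    rw [hH2eq t]
    exact add_le_add_right (double_small n hn ht (E ∩ Ω) (Eᶜ ∩ Ω) hv1.ne hv2.ne) _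
  have hX3le : ∀ t : ℝ,
      (∫⁻ x' in Eᶜ ∩ Ω, ∫⁻ y in E ∩ Ωᶜ, ENNReal.ofReal (heatKernel n t x' y)) ≤
      ∫⁻ x' in Eᶜ ∩ Ω, ∫⁻ y in E, ENNReal.ofReal (heatKernel n t x' y) := by
    intro t
    rw [hH2eq t]
    exact le_self_add
  have hu := tendsto_W n hn hE hr hΞ (hE.compl.inter hΩm) hWR2 hv2
  have εlim3 : Tendsto (fun s : ℝ => ENNReal.ofReal s * ENNReal.ofReal (2*cS))
      (𝓝[>] (0:ℝ)) (𝓝 0) := tendsto_ofReal_mul_const_zero _ ENNReal.ofReal_ne_top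
  have TB3 : Tendsto (fun s : ℝ =>
      ENNReal.ofReal s * ∫⁻ t in Set.Ioi (1:ℝ), ENNReal.ofReal (t ^ (-(1 + s))) *
        ∫⁻ x' in Eᶜ ∩ Ω, ∫⁻ y in E ∩ Ωᶜ, ENNReal.ofReal (heatKernel n t x' y))
      (𝓝[>] (0:ℝ)) (𝓝 (ΞE * volume (Eᶜ ∩ Ω))) := by
    have low : Tendsto (fun s : ℝ =>
        (ENNReal.ofReal s * ∫⁻ t in Set.Ioi (1:ℝ), ENNReal.ofReal (t ^ (-(1 + s))) *
          ∫⁻ x' in Eᶜ ∩ Ω, ∫⁻ y in E, ENNReal.ofReal (heatKernel n t x' y)) -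
        ENNReal.ofReal s * ENNReal.ofReal (2*cS))
        (𝓝[>] (0:ℝ)) (𝓝 (ΞE * volume (Eᶜ ∩ Ω))) := by
      have := ENNReal.Tendsto.sub hu εlim3 (Or.inr (by simp))
      simpa using this
    refine tendsto_of_tendsto_of_tendsto_of_le_of_le' low hu ?_ ?_
    · filter_upwards [self_mem_nhdsWithin] with s hs
      rw [tsub_le_iff_right]
      exact sandwich_tail hcS0 _ _ hH2le hs
    · refine Eventually.of_forall fun s => ?_
      refine mul_le_mul_right ?_ _
      refine setLIntegral_mono' measurableSet_Ioi fun t ht => ?_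
      exact mul_le_mul_right (hX3le t) _
  have TB3' : Tendsto (fun s : ℝ =>
      ENNReal.ofReal s * ∫⁻ t in Set.Ioi (1:ℝ), ENNReal.ofReal (t ^ (-(1 + s))) *
        ∫⁻ x' in E ∩ Ωᶜ, ∫⁻ y in Eᶜ ∩ Ω, ENNReal.ofReal (heatKernel n t x' y))
      (𝓝[>] (0:ℝ)) (𝓝 (ΞE * volume (Eᶜ ∩ Ω))) :=
    TB3.congr fun s => (hB3eq s).symm
  -- assemble
  have grand : Tendsto (fun s : ℝ => 2 * (
      ((ENNReal.ofReal s * ∫⁻ t in Set.Ioc (0:ℝ) 1, ENNReal.ofReal (t ^ (-(1 + s))) *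
        ∫⁻ x' in E ∩ Ω, ∫⁻ y in Eᶜ ∩ Ω, ENNReal.ofReal (heatKernel n t x' y)) +
      (ENNReal.ofReal s * ∫⁻ t in Set.Ioc (0:ℝ) 1, ENNReal.ofReal (t ^ (-(1 + s))) *
        ∫⁻ x' in E ∩ Ω, ∫⁻ y in Eᶜ ∩ Ωᶜ, ENNReal.ofReal (heatKernel n t x' y)) +
      (ENNReal.ofReal s * ∫⁻ t in Set.Ioc (0:ℝ) 1, ENNReal.ofReal (t ^ (-(1 + s))) *
        ∫⁻ x' in E ∩ Ωᶜ, ∫⁻ y in Eᶜ ∩ Ω, ENNReal.ofReal (heatKernel n t x' y))) +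
      (((ENNReal.ofReal s * ∫⁻ t in Set.Ioi (1:ℝ), ENNReal.ofReal (t ^ (-(1 + s))) *
        ∫⁻ x' in E ∩ Ω, ∫⁻ y in Eᶜ ∩ Ω, ENNReal.ofReal (heatKernel n t x' y)) +
      (ENNReal.ofReal s * ∫⁻ t in Set.Ioi (1:ℝ), ENNReal.ofReal (t ^ (-(1 + s))) *
        ∫⁻ x' in E ∩ Ω, ∫⁻ y in Eᶜ ∩ Ωᶜ, ENNReal.ofReal (heatKernel n t x' y))) +
      (ENNReal.ofReal s * ∫⁻ t in Set.Ioi (1:ℝ), ENNReal.ofReal (t ^ (-(1 + s))) *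
        ∫⁻ x' in E ∩ Ωᶜ, ∫⁻ y in Eᶜ ∩ Ω, ENNReal.ofReal (heatKernel n t x' y)))))
      (𝓝[>] (0:ℝ))
      (𝓝 (2 * ((0:ℝ≥0∞) + ((volume (E ∩ Ω) - ΞE * volume (E ∩ Ω)) +
        ΞE * volume (Eᶜ ∩ Ω))))) := by
    exact ENNReal.Tendsto.const_mul (TA.add (TB12.add TB3')) (Or.inr (by norm_num))
  have hval : (2:ℝ≥0∞) * ((0:ℝ≥0∞) + ((volume (E ∩ Ω) - ΞE * volume (E ∩ Ω)) +
      ΞE * volume (Eᶜ ∩ Ω))) =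
      2 * ((1 - ΞE) * volume (E ∩ Ω) + ΞE * volume (Eᶜ ∩ Ω)) := by
    rw [zero_add, ENNReal.sub_mul (fun _ _ => hv1.ne), one_mul]
  rw [← hval]
  refine grand.congr fun s => ?_
  unfold sPer
  rw [Lfun_split n s (E ∩ Ω) (Eᶜ ∩ Ω), Lfun_split n s (E ∩ Ω) (Eᶜ ∩ Ωᶜ),
    Lfun_split n s (E ∩ Ωᶜ) (Eᶜ ∩ Ω)]
  ring
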